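/- arXiv:math/0605257 — 9 statements merged into one kernel-verified Lean document; each statement's English description precedes it below -/
import Mathlib

section
/- Let R be a commutative ring in which 2 is invertible and 3 ≠ 0, and let G ⊆ R* be a subgroup with -1 ∈ G that is 2-maximal (i.e., a - b = 2(c - d) with a,b,c,d ∈ G implies a = b or a = -b). Then 2 ∉ G and 3 ∉ G. -/
theorem two_and_three_not_in_two_maximal_subgroup
    (R : Type*) [CommRing R] (h2 : IsUnit (2 : R)) (h3 : (3 : R) ≠ 0)
    (G : Subgroup Rˣ) (heven : (-1 : Rˣ) ∈ G)
    (hmax : ∀ a b c d : Rˣ, a ∈ G → b ∈ G → c ∈ G → d ∈ G →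
      (a : R) - (b : R) = 2 * ((c : R) - (d : R)) → a = b ∨ a = -b) :
    (∀ u : Rˣ, (u : R) = 2 → u ∉ G) ∧ (∀ u : Rˣ, (u : R) = 3 → u ∉ G) := by
  have hone : (1 : R) ≠ 0 := fun h => h3 (by rw [show (3:R) = 3 * 1 by ring, h, mul_zero])
  have htwo : (2 : R) ≠ 0 := fun h => hone (h2.mul_left_cancel (by rw [mul_one, h, mul_zero]))
  constructor
  · intro u hu hG
    rcases hmax (u * u) u u 1 (mul_mem hG hG) hG hG (one_mem G)
        (by push_cast; rw [hu]; ring) with h | h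
    · have : u = 1 := by
        have := mul_right_cancel (a := u) (b := u) (c := 1) (by rw [one_mul]; exact h)
        exact this
      have : (2 : R) = 1 := by rw [← hu, this, Units.val_one]
      exact hone (by linear_combination this)
    · have : u = -1 := by
        have := mul_right_cancel (a := u) (b := u) (c := -1) (by rw [neg_one_mul]; exact h)
        exact this
      have h21 : (2 : R) = -1 := by rw [← hu, this]; simp
      exact h3 (by linear_combination h21)
  · intro u hu hG
    rcases hmax (u * u) (-u) (u * u) u (mul_mem hG hG) (by simpa using mul_mem heven hG)
        (mul_mem hG hG) hG (by push_cast; rw [hu]; ring) with h | h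
    · have : u = -1 := by
        have := mul_right_cancel (a := u) (b := u) (c := -1) (by rw [neg_one_mul]; exact h)
        exact this
      have h31 : (3 : R) = -1 := by rw [← hu, this]; simp
      have h4 : (2 : R) * 2 = 0 := by linear_combination h31
      exact htwo (h2.mul_left_cancel (by rw [h4, mul_zero]))
    · have : u = 1 := by
        have := mul_right_cancel (a := u) (b := u) (c := 1)
          (by rw [one_mul]; rw [h]; simp)
        exact this
      have : (3 : R) = 1 := by rw [← hu, this, Units.val_one]
      exact htwo (by linear_combination this)
end

section
/- Let R be a commutative ring in which 2 is invertible and 3 ≠ 0, and let G ⊆ R* be an even 2-maximal subgroup. If a, b, c ∈ G satisfy a + b = 2c, then a = b = c. -/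
theorem two_maximal_a_add_b_eq_two_c
    (R : Type*) [CommRing R] (h2 : IsUnit (2 : R)) (h3 : (3 : R) ≠ 0)
    (G : Subgroup Rˣ) (heven : (-1 : Rˣ) ∈ G)
    (hmax : ∀ a b c d : Rˣ, a ∈ G → b ∈ G → c ∈ G → d ∈ G →
      (a : R) - (b : R) = 2 * ((c : R) - (d : R)) → a = b ∨ a = -b)
    (a b c : Rˣ) (ha : a ∈ G) (hb : b ∈ G) (hc : c ∈ G)
    (h : (a : R) + (b : R) = 2 * (c : R)) : a = b ∧ b = c := by
  have hnt : Nontrivial R := by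
    refine ⟨1, 0, fun h1 => h3 ?_⟩
    calc (3 : R) = 3 * 1 := by ring
    _ = 3 * 0 := by rw [h1]
    _ = 0 := by ring
  have key := hmax a b c b ha hb hc hb (by linear_combination h)
  have hab : a = b := by
    rcases key with h' | h'
    · exact h'
    · exfalso
      have hb0 : (a : R) = -(b : R) := by rw [h']; simp
      have : 2 * (c : R) = 0 := by linear_combination -h + hb0
      have hc0 : (c : R) = 0 := by
        rcases h2 with ⟨u, hu⟩
        have := congrArg (fun x => (↑u⁻¹ : R) * x) this
        simpa [← hu, ← mul_assoc] using this
      exact c.ne_zero hc0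
  have hbc : b = c := by
    have : (b : R) = c := by
      rcases h2 with ⟨u, hu⟩
      have h2c : 2 * (b : R) = 2 * c := by rw [← hab] at h ⊢; linear_combination h
      rw [← hu] at h2c
      have := congrArg (fun x => (↑u⁻¹ : R) * x) h2c
      simpa [← mul_assoc] using this
    exact Units.ext this
  exact ⟨hab, hbc⟩
end

section
/- Let R be a commutative ring in which 2 is invertible and 3 ≠ 0, and let G ⊆ R* be an even 2-maximal subgroup. If a, b, c ∈ G satisfy a + 2b = 3c, then a = b = c. -/
theorem two_maximal_a_add_two_b_eq_three_c
    (R : Type*) [CommRing R] (h2 : IsUnit (2 : R)) (h3 : (3 : R) ≠ 0)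
    (G : Subgroup Rˣ) (heven : (-1 : Rˣ) ∈ G)
    (hmax : ∀ a b c d : Rˣ, a ∈ G → b ∈ G → c ∈ G → d ∈ G →
      (a : R) - (b : R) = 2 * ((c : R) - (d : R)) → a = b ∨ a = -b)
    (a b c : Rˣ) (ha : a ∈ G) (hb : b ∈ G) (hc : c ∈ G)
    (h : (a : R) + 2 * (b : R) = 3 * (c : R)) : a = b ∧ b = c := by
  have key : (a : R) - c = 2 * ((c : R) - b) := by linear_combination h
  rcases hmax a c c b ha hc hc hb key with hac | hac
  · -- a = c, then 2b = 2c so b = c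
    have hR : (a : R) = c := by rw [hac]
    have h2b : (2 : R) * b = 2 * c := by linear_combination h - hR
    have hbc : (b : R) = c := h2.mul_left_cancel h2b
    have : b = c := Units.ext hbc
    exact ⟨hac.trans this.symm, this⟩
  · -- a = -c, then b = 2c, contradiction
    exfalso
    have hR : (a : R) = -c := by rw [hac]; simp
    have hb2 : (b : R) = 2 * c := by
      have : (2 : R) * b = 2 * (2 * c) := by linear_combination h - hR
      exact h2.mul_left_cancel this
    set u : Rˣ := b * c⁻¹ with hu_def
    have hu : u ∈ G := G.mul_mem hb (G.inv_mem hc)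
    have huv : (u : R) = 2 := by
      have : (u : R) = b * (c⁻¹ : Rˣ) := rfl
      rw [this, hb2, mul_assoc]
      simp
    have heq : ((u * u : Rˣ) : R) - u = 2 * ((u : R) - (1 : Rˣ)) := by
      push_cast
      rw [huv]; norm_num
    rcases hmax (u * u) u u 1 (G.mul_mem hu hu) hu hu G.one_mem heq with h' | h'
    · have : (4 : R) = 2 := by
        have := congrArg (Units.val) h'
        push_cast at this
        rw [huv] at this; linear_combination this
      have h20 : (2 : R) * 1 = 2 * 0 := by linear_combination this
      have h10 : (1 : R) = 0 := h2.mul_left_cancel h20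
      exact h3 (by rw [show (3:R) = 3 * 1 by ring, h10, mul_zero])
    · have : (4 : R) = -2 := by
        have := congrArg (Units.val) h'
        push_cast at this
        rw [huv] at this; linear_combination this
      have h23 : (2 : R) * 3 = 2 * 0 := by linear_combination this
      exact h3 (h2.mul_left_cancel h23)
end

section
/- Let k be an even positive integer and G ⊆ ℂ the group of k-th roots of unity. Then G is 2-maximal in ℂ: whenever a, b, c, d ∈ G satisfy a - b = 2(c - d), we have a = b or a = -b. -/
open Polynomial

/-- If `x` has absolute value 1 and `|x - 1| = 2`, then `x = -1`. -/
lemma aux_abs_sub_one_eq_two {x : ℂ} (h1 : ‖x‖ = 1)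
    (h2 : ‖x - 1‖ = 2) : x = -1 := by
  have hsq : Complex.normSq (x - 1) = 4 := by
    have h2' := congrArg (· ^ 2) h2
    simp only [Complex.sq_norm] at h2'
    norm_num at h2'
    exact h2'
  have hn1 : Complex.normSq x = 1 := by
    have := congrArg (· ^ 2) h1
    simpa [Complex.sq_norm] using this
  simp only [Complex.normSq_apply, Complex.sub_re, Complex.sub_im, Complex.one_re,
    Complex.one_im] at hsq hn1
  have hre : x.re = -1 := by nlinarith
  have him : x.im = 0 := by nlinarith
  exact Complex.ext (by simp [hre]) (by simp [him])

theorem roots_of_unity_two_maximal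
    (k : ℕ) (hk : 0 < k) (hke : Even k)
    (a b c d : ℂ) (ha : a ^ k = 1) (hb : b ^ k = 1) (hc : c ^ k = 1) (hd : d ^ k = 1)
    (h : a - b = 2 * (c - d)) : a = b ∨ a = -b := by
  have hkz : NeZero k := ⟨hk.ne'⟩
  by_cases hab : a = b
  · exact Or.inl hab
  right
  have habs : ∀ x : ℂ, x ^ k = 1 → ‖x‖ = 1 := fun x hx =>
    Complex.norm_eq_one_of_pow_eq_one hx hk.ne'
  have hnz : ∀ x : ℂ, x ^ k = 1 → x ≠ 0 := by
    intro x hx h0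
    rw [h0, zero_pow hk.ne'] at hx
    exact zero_ne_one hx
  obtain ⟨ζ, hζ⟩ : ∃ ζ : ℂ, IsPrimitiveRoot ζ k := ⟨_, Complex.isPrimitiveRoot_exp k hk.ne'⟩
  obtain ⟨α, -, hα⟩ := hζ.eq_pow_of_pow_eq_one ha
  obtain ⟨β, -, hβ⟩ := hζ.eq_pow_of_pow_eq_one hb
  obtain ⟨γ, -, hγ⟩ := hζ.eq_pow_of_pow_eq_one hc
  obtain ⟨δ, -, hδ⟩ := hζ.eq_pow_of_pow_eq_one hd
  -- Key: the equation holds for all "conjugates"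
  have key : ∀ j : ℕ, Nat.Coprime j k → a ^ j - b ^ j = 2 * (c ^ j - d ^ j) := by
    intro j hj
    set P : ℚ[X] := X ^ α - X ^ β - C 2 * X ^ γ + C 2 * X ^ δ with hP
    have hroot : aeval ζ P = 0 := by
      simp only [hP, map_add, map_sub, map_mul, aeval_X_pow, aeval_C, map_ofNat]
      rw [← hα, ← hβ, ← hγ, ← hδ] at h
      push_cast
      linear_combination h
    have hdvd : minpoly ℚ ζ ∣ P := minpoly.dvd ℚ ζ hroot
    rw [← cyclotomic_eq_minpoly_rat hζ hk] at hdvd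
    obtain ⟨Q, hQ⟩ := hdvd
    have hζj : IsPrimitiveRoot (ζ ^ j) k := hζ.pow_of_coprime j hj
    have hroot2 : aeval ((ζ : ℂ) ^ j) (cyclotomic k ℚ) = 0 := by
      rw [aeval_def, ← eval_map, map_cyclotomic]
      exact (hζj.isRoot_cyclotomic hk).eq_zero
    have hPj : aeval ((ζ : ℂ) ^ j) P = 0 := by
      rw [hQ, map_mul, hroot2, zero_mul]
    simp only [hP, map_add, map_sub, map_mul, aeval_X_pow, aeval_C, map_ofNat] at hPj
    rw [← hα, ← hβ, ← hγ, ← hδ]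
    have e1 : ∀ m : ℕ, ((ζ : ℂ) ^ j) ^ m = (ζ ^ m) ^ j := fun m => by
      rw [← pow_mul, ← pow_mul, mul_comm]
    rw [e1 α, e1 β, e1 γ, e1 δ] at hPj
    push_cast at hPj
    linear_combination hPj
  -- setup y = c / d
  have hdne : d ≠ 0 := hnz d hd
  have hbne : b ≠ 0 := hnz b hb
  have hcd : c ≠ d := by
    intro hcd
    rw [hcd, sub_self, mul_zero, sub_eq_zero] at h
    exact hab h
  set y : ℂ := c / d with hy
  have hyk : y ^ k = 1 := by rw [hy, div_pow, hc, hd, div_one]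
  have hy1 : y ≠ 1 := by
    intro h1
    apply hcd
    rw [hy, div_eq_one_iff_eq hdne] at h1
    exact h1
  have hyfin : IsOfFinOrder y := isOfFinOrder_iff_pow_eq_one.mpr ⟨k, hk, hyk⟩
  set q := orderOf y with hq
  have hq0 : q ≠ 0 := (orderOf_pos_iff.mpr hyfin).ne'
  have hqpos : 0 < q := Nat.pos_of_ne_zero hq0
  have hqz : NeZero q := ⟨hq0⟩
  have hqd : q ∣ k := orderOf_dvd_of_pow_eq_one hyk
  have hyprim : IsPrimitiveRoot y q := IsPrimitiveRoot.orderOf y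
  -- each primitive q-th root μ satisfies |1 - μ| ≤ 1
  have claim1 : ∀ μ ∈ primitiveRoots q ℂ, ‖1 - μ‖ ≤ 1 := by
    intro μ hμ
    rw [mem_primitiveRoots hqpos] at hμ
    obtain ⟨s, -, hs_cop, rfl⟩ := (hyprim.isPrimitiveRoot_iff).mp hμ
    obtain ⟨u, hu⟩ := ZMod.unitsMap_surjective hqd (ZMod.unitOfCoprime s hs_cop)
    set j := (u : ZMod k).val with hj
    have hjcop : Nat.Coprime j k := ZMod.val_coe_unit_coprime u
    have hjs : y ^ j = y ^ s := by
      have hmod : j % q = s % q := by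
        rw [← Nat.ModEq, ← ZMod.natCast_eq_natCast_iff]
        have := congrArg (Units.val) hu
        rw [ZMod.unitsMap_def] at this
        simpa [ZMod.natCast_val, hj] using this
      rw [← pow_mod_orderOf y j, ← pow_mod_orderOf y s, ← hq, hmod]
    have heq := key j hjcop
    have h2 : ‖a ^ j - b ^ j‖ ≤ 2 := by
      calc ‖a ^ j - b ^ j‖ ≤ ‖a ^ j‖ + ‖b ^ j‖ :=
            norm_sub_le _ _
        _ = 2 := by
            rw [norm_pow, norm_pow, habs a ha, habs b hb]; norm_num
    have h3 : ‖c ^ j - d ^ j‖ ≤ 1 := by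
      rw [heq, norm_mul] at h2
      simp only [Complex.norm_two] at h2
      linarith
    have h4 : (1 - y ^ j) * d ^ j = d ^ j - c ^ j := by
      rw [hy, div_pow, sub_mul, div_mul_cancel₀ _ (pow_ne_zero _ hdne), one_mul]
    calc ‖1 - y ^ s‖ = ‖(1 - y ^ j) * d ^ j‖ := by
          rw [← hjs, norm_mul, norm_pow, habs d hd, one_pow, mul_one]
      _ = ‖c ^ j - d ^ j‖ := by rw [h4, ← norm_neg, neg_sub]
      _ ≤ 1 := h3
  -- product of (1 - μ) over primitive q-th roots is a nonzero integer
  have hymem : y ∈ primitiveRoots q ℂ := (mem_primitiveRoots hqpos).mpr hyprim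
  have heval : (((cyclotomic q ℤ).eval 1 : ℤ) : ℂ) = ∏ μ ∈ primitiveRoots q ℂ, (1 - μ) := by
    have h1 : ((cyclotomic q ℤ).map (Int.castRingHom ℂ)).eval 1 =
        ∏ μ ∈ primitiveRoots q ℂ, (1 - μ) := by
      rw [map_cyclotomic_int, cyclotomic_eq_prod_X_sub_primitiveRoots hyprim, eval_prod]
      simp
    rw [← h1, eval_map, eval₂_at_one]
    simp
  have hne : ((cyclotomic q ℤ).eval 1 : ℤ) ≠ 0 := by
    intro h0
    rw [h0] at heval
    push_cast at heval
    obtain ⟨μ, hμmem, hμ0⟩ := Finset.prod_eq_zero_iff.mp heval.symm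
    rw [mem_primitiveRoots hqpos] at hμmem
    rw [sub_eq_zero] at hμ0
    rw [← hμ0] at hμmem
    have hq1 : q = 1 := hμmem.unique IsPrimitiveRoot.one
    have : orderOf y = 1 := by rw [← hq, hq1]
    exact hy1 (orderOf_eq_one_iff.mp this)
  have h1le : (1 : ℝ) ≤ ∏ μ ∈ primitiveRoots q ℂ, ‖1 - μ‖ := by
    rw [← norm_prod, ← heval]
    rw [Complex.norm_intCast]
    exact_mod_cast Int.one_le_abs hne
  -- conclude |1 - y| = 1
  have hprodsplit : ∏ μ ∈ primitiveRoots q ℂ, ‖1 - μ‖ =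
      ‖1 - y‖ * ∏ μ ∈ (primitiveRoots q ℂ).erase y, ‖1 - μ‖ :=
    (Finset.mul_prod_erase _ _ hymem).symm
  have hrest : ∏ μ ∈ (primitiveRoots q ℂ).erase y, ‖1 - μ‖ ≤ 1 :=
    Finset.prod_le_one (fun μ _ => norm_nonneg _)
      (fun μ hμ => claim1 μ (Finset.mem_of_mem_erase hμ))
  have habs_y : ‖1 - y‖ = 1 := by
    refine le_antisymm (claim1 y hymem) ?_
    by_contra hlt
    push_neg at hlt
    have hnn : (0:ℝ) ≤ ∏ μ ∈ (primitiveRoots q ℂ).erase y, ‖1 - μ‖ :=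
      Finset.prod_nonneg fun μ _ => norm_nonneg _
    nlinarith [h1le, hprodsplit, hrest, norm_nonneg (1 - y)]
  -- so |c - d| = 1, |a - b| = 2, hence a = -b
  have habs_cd : ‖c - d‖ = 1 := by
    have h4 : (1 - y) * d = d - c := by rw [hy, sub_mul, div_mul_cancel₀ _ hdne, one_mul]
    have := congrArg (‖·‖) h4
    rw [norm_mul, habs d hd, mul_one, habs_y] at this
    rw [← norm_neg, neg_sub]
    exact this.symm
  have habs_ab : ‖a - b‖ = 2 := by
    rw [h, norm_mul, habs_cd, mul_one, Complex.norm_two]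
  have hx1 : ‖a / b‖ = 1 := by
    rw [norm_div, habs a ha, habs b hb, div_one]
  have hx2 : ‖a / b - 1‖ = 2 := by
    rw [show a / b - 1 = (a - b) / b by field_simp, norm_div, habs_ab, habs b hb, div_one]
  have := aux_abs_sub_one_eq_two hx1 hx2
  field_simp at this
  exact this
end

section
/- Let z ∈ ℂ be a root of unity of order n, and suppose 1 - z = 2u for some algebraic integer u. Then n ≤ 2, i.e., z = ±1. -/
private lemma int_integral (k : ℤ) : IsIntegral ℤ ((k : ℂ)) := by
  simpa using isIntegral_algebraMap (R := ℤ) (A := ℂ) (x := k)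

private lemma nat_integral (k : ℕ) : IsIntegral ℤ ((k : ℂ)) := by
  have := int_integral (k : ℤ)
  push_cast at this
  exact this

private lemma binom_aux (x : ℂ) (hx : IsIntegral ℤ x) (n : ℕ) :
    ∃ c : ℂ, IsIntegral ℤ c ∧ (1 + x) ^ n = 1 + n * x + x ^ 2 * c := by
  induction n with
  | zero => exact ⟨0, isIntegral_zero, by ring⟩
  | succ n ih =>
    obtain ⟨c, hc, hcn⟩ := ih
    refine ⟨(n : ℂ) + c + c * x, ((nat_integral n).add hc).add (hc.mul hx), ?_⟩
    rw [pow_succ, hcn]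
    push_cast
    ring

private lemma rat_int (q : ℚ) (h : IsIntegral ℤ ((q : ℂ))) : ∃ k : ℤ, (k : ℚ) = q := by
  have hq : (q : ℂ) = algebraMap ℚ ℂ q := rfl
  rw [hq, isIntegral_algebraMap_iff (algebraMap ℚ ℂ).injective] at h
  obtain ⟨k, hk⟩ := IsIntegrallyClosed.isIntegral_iff.mp h
  exact ⟨k, hk⟩

private lemma key : ∀ n : ℕ, 0 < n → ∀ z u : ℂ, IsPrimitiveRoot z n →
    IsIntegral ℤ u → 1 - z = 2 * u → n ≤ 2 := by
  intro n
  induction n using Nat.strong_induction_on with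
  | _ n ih =>
    intro hn z u hz hu h
    by_contra hgt
    push_neg at hgt
    have hz1 : z ≠ 1 := by
      intro he
      have := hz.unique (he ▸ IsPrimitiveRoot.one)
      omega
    have hu0 : u ≠ 0 := by
      intro he
      apply hz1
      have h0 : (1 : ℂ) - z = 0 := by rw [h, he, mul_zero]
      linear_combination -h0
    rcases Nat.even_or_odd n with hev | hodd
    · -- n even, n ≥ 3, so n = 2*m with m ≥ 2
      obtain ⟨m, hm⟩ := hev
      have hzint : IsIntegral ℤ z := hz.isIntegral hn
      have hz2 : IsPrimitiveRoot (z ^ 2) m := hz.pow hn (by omega)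
      have h2 : 1 - z ^ 2 = 2 * (u * (1 + z)) := by
        have he : 1 - z ^ 2 = (1 - z) * (1 + z) := by ring
        rw [he, h]; ring
      have hm' := ih m (by omega) (by omega) (z ^ 2) (u * (1 + z)) hz2
        (hu.mul (isIntegral_one.add hzint)) h2
      have hm4 : m = 2 := by omega
      have hzsq : z ^ 2 = -1 := by
        have h4 : IsPrimitiveRoot (z ^ 2) 2 := hm4 ▸ hz2
        have hpow : (z ^ 2) ^ 2 = 1 := h4.pow_eq_one
        have hne : z ^ 2 ≠ 1 := by
          intro he
          have := h4.unique (he ▸ IsPrimitiveRoot.one)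
          omega
        have hfac : (z ^ 2 - 1) * (z ^ 2 + 1) = 0 := by linear_combination hpow
        rcases mul_eq_zero.mp hfac with h' | h'
        · exact absurd (by linear_combination h') hne
        · linear_combination h'
      have hu4 : u ^ 4 = -(1 / 4 : ℂ) := by
        have hu2 : (2 : ℂ) * u = 1 - z := h.symm
        have : (2 * u) ^ 4 = (1 - z) ^ 4 := by rw [hu2]
        have hexp : (1 - z) ^ 4 = -4 := by linear_combination (z^2 - 4*z + 5) * hzsq
        rw [hexp] at this
        linear_combination (1 / 16 : ℂ) * this
      have hint : IsIntegral ℤ (((-(1/4) : ℚ) : ℂ)) := by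
        push_cast
        rw [← hu4]
        exact hu.pow 4
      obtain ⟨k, hk⟩ := rat_int _ hint
      have h4k : (4 : ℚ) * k = -1 := by rw [hk]; ring
      have h4k' : (4 : ℤ) * k = -1 := by exact_mod_cast h4k
      omega
    · -- n odd ≥ 3 : binomial argument shows n is even, contradiction
      have hx : IsIntegral ℤ (-(2 * u)) := ((nat_integral 2).mul hu).neg
      obtain ⟨c, hc, hcn⟩ := binom_aux (-(2 * u)) hx n
      have hz' : (1 + -(2 * u)) = z := by linear_combination h
      rw [hz', hz.pow_eq_one] at hcn
      -- 1 = 1 - 2nu + 4u²c  ⇒  u * (n - 2uc) = 0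
      have hfac : u * ((n : ℂ) - 2 * (u * c)) = 0 := by linear_combination (1/2 : ℂ) * hcn
      have hnc : (n : ℂ) = 2 * (u * c) := by
        rcases mul_eq_zero.mp hfac with h' | h'
        · exact absurd h' hu0
        · linear_combination h'
      have hint : IsIntegral ℤ (((n / 2 : ℚ) : ℂ)) := by
        have : ((n / 2 : ℚ) : ℂ) = u * c := by
          push_cast
          field_simp
          linear_combination hnc
        rw [this]
        exact hu.mul hc
      obtain ⟨k, hk⟩ := rat_int _ hint
      have h2k : (2 : ℚ) * k = n := by rw [hk]; ring
      have h2k' : (2 : ℤ) * k = n := by exact_mod_cast h2k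
      rcases hodd with ⟨j, hj⟩
      omega

theorem root_of_unity_one_sub_eq_two_mul_algebraic_integer
    (n : ℕ) (hn : 0 < n) (z : ℂ) (hz : IsPrimitiveRoot z n)
    (u : ℂ) (hu : IsIntegral ℤ u) (h : 1 - z = 2 * u) :
    n ≤ 2 ∧ (z = 1 ∨ z = -1) := by
  have hle : n ≤ 2 := key n hn z u hz hu h
  refine ⟨hle, ?_⟩
  interval_cases n
  · left
    simpa using hz.pow_eq_one
  · have hpow : z ^ 2 = 1 := hz.pow_eq_one
    have hfac : (z - 1) * (z + 1) = 0 := by linear_combination hpow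
    rcases mul_eq_zero.mp hfac with h' | h'
    · left; linear_combination h'
    · right; linear_combination h'
end

section
/- Let p be a prime, w = e^{2πi/p}, and S ⊆ ℤ/pℤ a subset. Define f : ℤ/pℤ → ℂ by f(x) = Σ_{t∈S} w^{xt}. Then for x, y ∈ (ℤ/pℤ)*, we have f(x) = f(y) if and only if xS = yS. -/
open Polynomial Finset

lemma indicator_sum_eq_aux {A B : Finset ℕ}
    (h : (∑ i ∈ A, (X : ℚ[X]) ^ i) = ∑ i ∈ B, (X : ℚ[X]) ^ i) : A = B := by
  ext j
  have hc := congrArg (fun q => Polynomial.coeff q j) h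
  simp only [finset_sum_coeff, coeff_X_pow] at hc
  rw [Finset.sum_ite_eq A j (fun _ => (1:ℚ)), Finset.sum_ite_eq B j (fun _ => (1:ℚ))] at hc
  by_cases hA : j ∈ A <;> by_cases hB : j ∈ B <;> simp_all

lemma sum_root_pow_inj (p : ℕ) (hp : p.Prime) (A B : Finset (ZMod p))
    (hcard : A.card = B.card)
    (h : (∑ a ∈ A, Complex.exp (2 * Real.pi * Complex.I / p) ^ a.val) =
         ∑ b ∈ B, Complex.exp (2 * Real.pi * Complex.I / p) ^ b.val) : A = B := by
  haveI : Fact p.Prime := ⟨hp⟩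
  haveI : NeZero p := ⟨hp.ne_zero⟩
  set w : ℂ := Complex.exp (2 * Real.pi * Complex.I / p) with hwdef
  have hw : IsPrimitiveRoot w p := Complex.isPrimitiveRoot_exp p hp.ne_zero
  set g : ℚ[X] := (∑ a ∈ A, (X : ℚ[X]) ^ a.val) - ∑ b ∈ B, (X : ℚ[X]) ^ b.val with hgdef
  have hgw : (Polynomial.aeval w) g = 0 := by
    simp only [hgdef, map_sub, map_sum, map_pow, aeval_X]
    rw [h, sub_self]
  have hdvd : cyclotomic p ℚ ∣ g := by
    rw [cyclotomic_eq_minpoly_rat hw hp.pos]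
    exact minpoly.dvd ℚ w hgw
  have hg0 : g = 0 := by
    by_contra hne
    obtain ⟨q, hq⟩ := hdvd
    have hqne : q ≠ 0 := by rintro rfl; simp at hq; exact hne hq
    have hcyc_ne : cyclotomic p ℚ ≠ 0 := cyclotomic_ne_zero p ℚ
    have hdegcyc : (cyclotomic p ℚ).natDegree = p - 1 := by
      rw [natDegree_cyclotomic, Nat.totient_prime hp]
    have hdegA : (∑ a ∈ A, (X : ℚ[X]) ^ a.val).natDegree ≤ p - 1 := by
      refine Polynomial.natDegree_sum_le_of_forall_le _ _ (fun a _ => ?_)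
      rw [natDegree_X_pow]
      exact Nat.le_sub_one_of_lt (ZMod.val_lt a)
    have hdegB : (∑ b ∈ B, (X : ℚ[X]) ^ b.val).natDegree ≤ p - 1 := by
      refine Polynomial.natDegree_sum_le_of_forall_le _ _ (fun b _ => ?_)
      rw [natDegree_X_pow]
      exact Nat.le_sub_one_of_lt (ZMod.val_lt b)
    have hdegg : g.natDegree ≤ p - 1 :=
      le_trans (natDegree_sub_le _ _) (max_le hdegA hdegB)
    have hdmul : g.natDegree = (p - 1) + q.natDegree := by
      rw [hq, natDegree_mul hcyc_ne hqne, hdegcyc]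
    have hq0 : q.natDegree = 0 := by omega
    obtain ⟨c, hc⟩ := natDegree_eq_zero.mp hq0
    have heval : g.eval 1 = 0 := by
      simp [hgdef, eval_finset_sum, hcard]
    rw [hq, ← hc, eval_mul, eval_one_cyclotomic_prime, eval_C] at heval
    have hcz : c = 0 := by
      rcases mul_eq_zero.mp heval with h' | h'
      · exact absurd h' (by exact_mod_cast hp.ne_zero)
      · exact h'
    exact hqne (by rw [← hc, hcz, map_zero])
  have hsum : (∑ a ∈ A, (X : ℚ[X]) ^ a.val) = ∑ b ∈ B, (X : ℚ[X]) ^ b.val :=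
    sub_eq_zero.mp hg0
  have hinj : Function.Injective (ZMod.val : ZMod p → ℕ) := ZMod.val_injective p
  have hA' : (∑ a ∈ A, (X : ℚ[X]) ^ a.val) = ∑ i ∈ A.image ZMod.val, (X : ℚ[X]) ^ i :=
    (Finset.sum_image (fun a _ b _ hab => hinj hab)).symm
  have hB' : (∑ b ∈ B, (X : ℚ[X]) ^ b.val) = ∑ i ∈ B.image ZMod.val, (X : ℚ[X]) ^ i :=
    (Finset.sum_image (fun a _ b _ hab => hinj hab)).symm
  have him : A.image ZMod.val = B.image ZMod.val :=
    indicator_sum_eq_aux (by rw [← hA', ← hB', hsum])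
  exact Finset.image_injective hinj him

theorem circulant_eigenvalue_injectivity
    (p : ℕ) (hp : p.Prime) (S : Finset (ZMod p)) (x y : (ZMod p)ˣ) :
    (∑ t ∈ S, Complex.exp (2 * Real.pi * Complex.I / p) ^ (((x : ZMod p) * t).val)) =
      (∑ t ∈ S, Complex.exp (2 * Real.pi * Complex.I / p) ^ (((y : ZMod p) * t).val)) ↔
    S.image (fun t => (x : ZMod p) * t) = S.image (fun t => (y : ZMod p) * t) := by
  haveI : Fact p.Prime := ⟨hp⟩
  have hinjx : Function.Injective (fun t : ZMod p => (x : ZMod p) * t) :=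
    fun a b hab => mul_left_cancel₀ (Units.ne_zero x) hab
  have hinjy : Function.Injective (fun t : ZMod p => (y : ZMod p) * t) :=
    fun a b hab => mul_left_cancel₀ (Units.ne_zero y) hab
  have hx : (∑ s ∈ S.image (fun t => (x : ZMod p) * t),
        Complex.exp (2 * Real.pi * Complex.I / p) ^ s.val) =
      ∑ t ∈ S, Complex.exp (2 * Real.pi * Complex.I / p) ^ (((x : ZMod p) * t).val) :=
    Finset.sum_image (fun a _ b _ hab => hinjx hab)
  have hy : (∑ s ∈ S.image (fun t => (y : ZMod p) * t),
        Complex.exp (2 * Real.pi * Complex.I / p) ^ s.val) =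
      ∑ t ∈ S, Complex.exp (2 * Real.pi * Complex.I / p) ^ (((y : ZMod p) * t).val) :=
    Finset.sum_image (fun a _ b _ hab => hinjy hab)
  constructor
  · intro h
    refine sum_root_pow_inj p hp _ _ ?_ ?_
    · rw [Finset.card_image_of_injective _ hinjx, Finset.card_image_of_injective _ hinjy]
    · rw [hx, hy, h]
  · intro h
    rw [← hx, ← hy, h]
end

section
/- Let k be an even number and p a prime with p > 6^{φ(k)} and p ≡ 1 (mod k), where φ is Euler's totient function. Then the unique subgroup E ⊆ (ℤ/pℤ)* of order k is 2-maximal: a - b = 2(c - d) with a, b, c, d ∈ E implies a = b or a = -b. -/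
open Polynomial IntermediateField

lemma stepA (k : ℕ) (hk : 0 < k) [NeZero k] [IsCyclotomicExtension {k} ℚ (CyclotomicField k ℚ)] (p : ℕ) [Fact p.Prime]
    (hkltp : k < p) (hp : p > 6 ^ Nat.totient k)
    (g : ZMod p) (hg : IsPrimitiveRoot g k) (i j l m : ℕ)
    (heq : g ^ i - g ^ j - 2 * g ^ l + 2 * g ^ m = 0) :
    (IsCyclotomicExtension.zeta k ℚ (CyclotomicField k ℚ)) ^ i
      - (IsCyclotomicExtension.zeta k ℚ (CyclotomicField k ℚ)) ^ j
      - 2 * (IsCyclotomicExtension.zeta k ℚ (CyclotomicField k ℚ)) ^ l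
      + 2 * (IsCyclotomicExtension.zeta k ℚ (CyclotomicField k ℚ)) ^ m = 0 := by
  set k' : ℕ+ := ⟨k, hk⟩ with hk'
  set K := CyclotomicField k ℚ with hK
  set ζ : K := IsCyclotomicExtension.zeta k ℚ K with hζdef
  have hζ : IsPrimitiveRoot ζ k := IsCyclotomicExtension.zeta_spec k ℚ K
  haveI : FiniteDimensional ℚ K := IsCyclotomicExtension.finiteDimensional {k} ℚ K
  have hfinrank : Module.finrank ℚ K = Nat.totient k :=
    IsCyclotomicExtension.finrank K (Polynomial.cyclotomic.irreducible_rat hk)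
  set w : K := ζ ^ i - ζ ^ j - 2 * ζ ^ l + 2 * ζ ^ m with hw
  have hζint : IsIntegral ℤ ζ := hζ.isIntegral hk
  have hwint : IsIntegral ℤ w := by
    exact (((hζint.pow i).sub (hζint.pow j)).sub
      ((isIntegral_algebraMap (R := ℤ) (x := 2)).mul (hζint.pow l))).add
      ((isIntegral_algebraMap (R := ℤ) (x := 2)).mul (hζint.pow m))
  -- the minimal polynomial of w over ℤ
  set μ : ℤ[X] := minpoly ℤ w with hμ
  set Q : ℤ[X] := X ^ i - X ^ j - C 2 * X ^ l + C 2 * X ^ m with hQ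
  have haevalQ : aeval ζ Q = w := by
    simp [hQ, hw, aeval_C, map_ofNat]
  have hcomp : aeval ζ (μ.comp Q) = 0 := by
    rw [aeval_comp, haevalQ]; exact minpoly.aeval ℤ w
  have hdvd : cyclotomic k ℤ ∣ μ.comp Q := by
    rw [cyclotomic_eq_minpoly hζ hk]
    exact minpoly.isIntegrallyClosed_dvd hζint hcomp
  haveI : NeZero (k : ZMod p) := ⟨by
    intro h0
    rw [ZMod.natCast_eq_zero_iff] at h0
    exact absurd (Nat.le_of_dvd hk h0) (not_le.mpr hkltp)⟩
  have hgroot : eval g (cyclotomic k (ZMod p)) = 0 := (isRoot_cyclotomic_iff).mpr hg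
  obtain ⟨Rp, hRp⟩ := hdvd
  have hQg : eval g (Q.map (Int.castRingHom (ZMod p))) = 0 := by
    simp [hQ]
    linear_combination heq
  have hμ0 : ((μ.coeff 0 : ℤ) : ZMod p) = 0 := by
    have h1 : eval g ((μ.comp Q).map (Int.castRingHom (ZMod p))) = 0 := by
      rw [hRp, Polynomial.map_mul, eval_mul, map_cyclotomic, hgroot, zero_mul]
    rw [Polynomial.map_comp, eval_comp, hQg, ← coeff_zero_eq_eval_zero, coeff_map] at h1
    simpa using h1
  have hpdvd : (p : ℤ) ∣ μ.coeff 0 := by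
    rwa [ZMod.intCast_zmod_eq_zero_iff_dvd] at hμ0
  -- the norm of w as a power of the constant coefficient
  have hwintQ : IsIntegral ℚ w := .of_finite ℚ w
  have hnorm1 : Algebra.norm ℚ w =
      ((-1) ^ (IntermediateField.adjoin.powerBasis hwintQ).dim * ((minpoly ℚ w).coeff 0))
        ^ Module.finrank ℚ⟮w⟯ K := by
    rw [Algebra.norm_eq_norm_adjoin ℚ w]
    congr 1
    rw [← IntermediateField.adjoin.powerBasis_gen hwintQ,
      Algebra.PowerBasis.norm_gen_eq_coeff_zero_minpoly,
      IntermediateField.adjoin.powerBasis_gen, IntermediateField.minpoly_gen]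
  have hminQ : (minpoly ℚ w).coeff 0 = ((μ.coeff 0 : ℤ) : ℚ) := by
    rw [minpoly.isIntegrallyClosed_eq_field_fractions' ℚ hwint, coeff_map]
    rfl
  -- bound on the norm via embeddings
  have hcard : Fintype.card (K →ₐ[ℚ] ℂ) = Nat.totient k := by
    rw [AlgHom.card]; exact hfinrank
  have habsσ : ∀ σ : K →ₐ[ℚ] ℂ, ‖σ w‖ ≤ 6 := by
    intro σ
    have hζσ : ‖σ ζ‖ = 1 := by
      refine Complex.norm_eq_one_of_pow_eq_one ?_ hk.ne'
      rw [← map_pow, hζ.pow_eq_one, map_one]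
    have h1 : σ w = σ ζ ^ i - σ ζ ^ j - 2 * σ ζ ^ l + 2 * σ ζ ^ m := by
      rw [hw]; simp only [map_add, map_sub, map_mul, map_pow, map_ofNat]
    rw [h1]
    calc ‖σ ζ ^ i - σ ζ ^ j - 2 * σ ζ ^ l + 2 * σ ζ ^ m‖
        ≤ ‖σ ζ ^ i - σ ζ ^ j - 2 * σ ζ ^ l‖ + ‖2 * σ ζ ^ m‖ := norm_add_le _ _
      _ ≤ ‖σ ζ ^ i - σ ζ ^ j‖ + ‖2 * σ ζ ^ l‖ + ‖2 * σ ζ ^ m‖ := by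
          gcongr; exact norm_sub_le _ _
      _ ≤ ‖σ ζ ^ i‖ + ‖σ ζ ^ j‖ + ‖2 * σ ζ ^ l‖ + ‖2 * σ ζ ^ m‖ := by
          gcongr; exact norm_sub_le _ _
      _ = 6 := by
          rw [norm_mul, norm_mul, norm_pow, norm_pow, norm_pow, norm_pow, hζσ]
          norm_num
  have hprod : ‖(algebraMap ℚ ℂ) (Algebra.norm ℚ w)‖ ≤ 6 ^ Nat.totient k := by
    rw [Algebra.norm_eq_prod_embeddings ℚ ℂ, norm_prod]
    calc ∏ σ : K →ₐ[ℚ] ℂ, ‖σ w‖ ≤ ∏ _σ : K →ₐ[ℚ] ℂ, 6 :=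
          Finset.prod_le_prod (fun _ _ => norm_nonneg _) (fun σ _ => habsσ σ)
      _ = 6 ^ Nat.totient k := by
          rw [Finset.prod_const, Finset.card_univ, hcard]
  have habsN : |(Algebra.norm ℚ w : ℚ)| ≤ (6 : ℚ) ^ Nat.totient k := by
    have h2 : ‖((Algebra.norm ℚ w : ℚ) : ℂ)‖ = |((Algebra.norm ℚ w : ℚ) : ℝ)| :=
      Complex.norm_ratCast _
    have h3 : (algebraMap ℚ ℂ) (Algebra.norm ℚ w) = ((Algebra.norm ℚ w : ℚ) : ℂ) := rfl
    rw [h3, h2] at hprod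
    have := hprod
    rw [abs_le] at this ⊢
    constructor <;> [exact_mod_cast this.1; exact_mod_cast this.2]
  -- conclude coeff 0 = 0
  have hc0 : μ.coeff 0 = 0 := by
    by_contra h0
    have h1 : (p : ℤ) ≤ |μ.coeff 0| := Int.le_of_dvd (abs_pos.mpr h0) ((dvd_abs _ _).mpr hpdvd)
    have he : 0 < Module.finrank ℚ⟮w⟯ K := Module.finrank_pos
    have h2 : (p : ℚ) ≤ |(Algebra.norm ℚ w : ℚ)| := by
      rw [hnorm1, abs_pow, abs_mul, abs_pow, abs_neg, abs_one, one_pow, one_mul, hminQ]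
      calc (p : ℚ) ≤ |((μ.coeff 0 : ℤ) : ℚ)| := by exact_mod_cast h1
        _ ≤ |((μ.coeff 0 : ℤ) : ℚ)| ^ Module.finrank ℚ⟮w⟯ K := by
            refine le_self_pow₀ ?_ he.ne'
            calc (1 : ℚ) ≤ (p : ℚ) := by exact_mod_cast (Fact.out (p := p.Prime)).pos
              _ ≤ |((μ.coeff 0 : ℤ) : ℚ)| := by exact_mod_cast h1
    have h3 : (p : ℚ) ≤ (6 : ℚ) ^ Nat.totient k := le_trans h2 habsN
    have h4 : (6 : ℚ) ^ Nat.totient k < (p : ℚ) := by exact_mod_cast hp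
    linarith
  -- norm is zero, hence w = 0
  have hN0 : Algebra.norm ℚ w = 0 := by
    rw [hnorm1, hminQ, hc0]
    simp [Module.finrank_pos.ne']
  have hw0 : w = 0 := by
    have := Algebra.norm_eq_zero_iff (R := ℚ) (S := K) (x := w)
    exact this.mp hN0
  exact hw0


lemma complex_aux {z : ℂ} (hz1 : ‖z‖ = 1) (hz2 : ‖z - 1‖ = 2) : z = -1 := by
  have h1 : Complex.normSq z = 1 := by
    have hh := Complex.sq_norm z
    rw [hz1] at hh
    rw [← hh]; norm_num
  have h2 : Complex.normSq (z - 1) = 4 := by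
    have hh := Complex.sq_norm (z - 1)
    rw [hz2] at hh
    rw [← hh]; norm_num
  rw [Complex.normSq_apply] at h1 h2
  rw [Complex.sub_re, Complex.sub_im, Complex.one_re, Complex.one_im, sub_zero] at h2
  have hre : z.re = -1 := by nlinarith
  have him : z.im = 0 := by nlinarith
  apply Complex.ext
  · simp [hre]
  · simp [him]

lemma stepB (k : ℕ) (hk : 0 < k) [NeZero k] [IsCyclotomicExtension {k} ℚ (CyclotomicField k ℚ)] (i j l m : ℕ)
    (hw0 : (IsCyclotomicExtension.zeta k ℚ (CyclotomicField k ℚ)) ^ i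
      - (IsCyclotomicExtension.zeta k ℚ (CyclotomicField k ℚ)) ^ j
      - 2 * (IsCyclotomicExtension.zeta k ℚ (CyclotomicField k ℚ)) ^ l
      + 2 * (IsCyclotomicExtension.zeta k ℚ (CyclotomicField k ℚ)) ^ m = 0) :
    (IsCyclotomicExtension.zeta k ℚ (CyclotomicField k ℚ)) ^ (2 * i)
      = (IsCyclotomicExtension.zeta k ℚ (CyclotomicField k ℚ)) ^ (2 * j) := by
  set k' : ℕ+ := ⟨k, hk⟩ with hk'
  set K := CyclotomicField k ℚ with hK
  set ζ : K := IsCyclotomicExtension.zeta k ℚ K with hζdef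
  have hζ : IsPrimitiveRoot ζ k := IsCyclotomicExtension.zeta_spec k ℚ K
  haveI : FiniteDimensional ℚ K := IsCyclotomicExtension.finiteDimensional {k} ℚ K
  have hfinrank : Module.finrank ℚ K = Nat.totient k :=
    IsCyclotomicExtension.finrank K (Polynomial.cyclotomic.irreducible_rat hk)
  have hζint : IsIntegral ℤ ζ := hζ.isIntegral hk
  have hone : ∀ n : ℕ, ζ ^ (k * n) = 1 := by
    intro n; rw [pow_mul, hζ.pow_eq_one, one_pow]
  -- suffices : ζ ^ i = ζ ^ j ∨ ζ ^ i = - ζ ^ j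
  suffices hsuff : ζ ^ i = ζ ^ j ∨ ζ ^ i = -ζ ^ j by
    rcases hsuff with h | h
    · rw [pow_mul', pow_mul', h]
    · rw [pow_mul', pow_mul', h, neg_sq]
  classical
  by_cases hlm : (ζ : K) ^ l = ζ ^ m
  · left
    have : ζ ^ i - ζ ^ j = 0 := by rw [hlm] at hw0; linear_combination hw0
    exact sub_eq_zero.mp this
  · right
    set e : ℕ := i + (k - 1) * j with he
    set f : ℕ := l + (k - 1) * m with hf
    set t : ℕ := (k - 1) * j + m with ht
    have hkj : (k - 1) * j + j = k * j := by
      cases k with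
      | zero => exact absurd rfl hk.ne'
      | succ n => simp [Nat.succ_sub_one]; ring
    have hkm : (k - 1) * m + m = k * m := by
      cases k with
      | zero => exact absurd rfl hk.ne'
      | succ n => simp [Nat.succ_sub_one]; ring
    have hζkj : ζ ^ ((k - 1) * j) * ζ ^ j = 1 := by rw [← pow_add, hkj, hone]
    have hζkm : ζ ^ ((k - 1) * m) * ζ ^ m = 1 := by rw [← pow_add, hkm, hone]
    have h1 : ζ ^ e - 1 = ζ ^ ((k - 1) * j) * (ζ ^ i - ζ ^ j) := by
      rw [mul_sub, ← pow_add, hζkj, he, add_comm i]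
    have hmf : m + f = l + k * m := by rw [hf, ← hkm]; ring
    have h2 : ζ ^ l - ζ ^ m = ζ ^ m * (ζ ^ f - 1) := by
      rw [mul_sub, mul_one, ← pow_add, hmf, pow_add, hone, mul_one]
    have hfne : ζ ^ f - 1 ≠ 0 := by
      intro h0
      apply hlm
      have := h2
      rw [h0, mul_zero, sub_eq_zero] at this
      exact this
    have hmain : ζ ^ e - 1 = 2 * ζ ^ t * (ζ ^ f - 1) := by
      rw [h1, ht]
      have hio : ζ ^ i - ζ ^ j = 2 * (ζ ^ l - ζ ^ m) := by linear_combination hw0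
      rw [hio, h2, pow_add]
      ring
    -- norms
    obtain ⟨n2, hn2⟩ : ∃ n : ℤ, (n : ℚ) = Algebra.norm ℚ (ζ ^ f - 1) :=
      IsIntegrallyClosed.isIntegral_iff.mp
        (Algebra.isIntegral_norm ℚ ((hζint.pow f).sub isIntegral_one))
    have hn2ne : n2 ≠ 0 := by
      intro h0
      apply hfne
      have hnn : Algebra.norm ℚ (ζ ^ f - 1) = 0 := by rw [← hn2, h0]; norm_num
      exact (Algebra.norm_eq_zero_iff).mp hnn
    have hcard : Fintype.card (K →ₐ[ℚ] ℂ) = Nat.totient k := by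
      rw [AlgHom.card]; exact hfinrank
    have hζσ : ∀ σ : K →ₐ[ℚ] ℂ, ∀ n : ℕ, ‖σ (ζ ^ n)‖ = 1 := by
      intro σ n
      rw [map_pow, norm_pow,
        Complex.norm_eq_one_of_pow_eq_one
          (by rw [← map_pow, hζ.pow_eq_one, map_one]) hk.ne', one_pow]
    have hAB : ∏ σ : K →ₐ[ℚ] ℂ, ‖σ (ζ ^ e - 1)‖
        = 2 ^ Nat.totient k * ∏ σ : K →ₐ[ℚ] ℂ, ‖σ (ζ ^ f - 1)‖ := by
      rw [← hcard, ← Finset.card_univ, ← Finset.prod_const, ← Finset.prod_mul_distrib]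
      refine Finset.prod_congr rfl fun σ _ => ?_
      rw [hmain, map_mul, map_mul, norm_mul, norm_mul, map_ofNat]
      have h2c : ‖(2 : ℂ)‖ = 2 := by norm_num
      rw [h2c, hζσ σ t, mul_one]
    have hBge : (1 : ℝ) ≤ ∏ σ : K →ₐ[ℚ] ℂ, ‖σ (ζ ^ f - 1)‖ := by
      have h1 : algebraMap ℚ ℂ (Algebra.norm ℚ (ζ ^ f - 1))
          = ∏ σ : K →ₐ[ℚ] ℂ, σ (ζ ^ f - 1) := Algebra.norm_eq_prod_embeddings ℚ ℂ _
      have h2 : ∏ σ : K →ₐ[ℚ] ℂ, ‖σ (ζ ^ f - 1)‖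
          = ‖∏ σ : K →ₐ[ℚ] ℂ, σ (ζ ^ f - 1)‖ := (norm_prod _ _).symm
      rw [h2, ← h1, ← hn2]
      have h3 : algebraMap ℚ ℂ ((n2 : ℤ) : ℚ) = (n2 : ℂ) := by push_cast; rfl
      rw [h3, Complex.norm_intCast]
      have h4 : (1 : ℤ) ≤ |n2| := Int.one_le_abs hn2ne
      calc (1 : ℝ) ≤ |(n2 : ℝ)| := by rw [← Int.cast_abs]; exact_mod_cast h4
        _ = ‖(n2 : ℝ)‖ := (Real.norm_eq_abs _).symm
        _ = |(n2 : ℝ)| := Real.norm_eq_abs _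
    have hfle : ∀ σ : K →ₐ[ℚ] ℂ, ‖σ (ζ ^ e - 1)‖ ≤ 2 := by
      intro σ
      rw [map_sub, map_one]
      calc ‖σ (ζ ^ e) - 1‖ ≤ ‖σ (ζ ^ e)‖ + ‖(1 : ℂ)‖ := norm_sub_le _ _
        _ = 2 := by rw [hζσ σ e]; norm_num
    haveI hne : Nonempty (K →ₐ[ℚ] ℂ) := Fintype.card_pos_iff.mp
      (by rw [hcard]; exact Nat.totient_pos.mpr hk)
    obtain ⟨ι⟩ := hne
    have hι2 : ‖ι (ζ ^ e - 1)‖ = 2 := by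
      refine le_antisymm (hfle ι) ?_
      have hsplit : ∏ σ : K →ₐ[ℚ] ℂ, ‖σ (ζ ^ e - 1)‖
          = ‖ι (ζ ^ e - 1)‖ * ∏ σ ∈ Finset.univ.erase ι, ‖σ (ζ ^ e - 1)‖ :=
        (Finset.mul_prod_erase Finset.univ _ (Finset.mem_univ ι)).symm
      have hrest : ∏ σ ∈ Finset.univ.erase ι, ‖σ (ζ ^ e - 1)‖
          ≤ 2 ^ (Nat.totient k - 1) := by
        calc ∏ σ ∈ Finset.univ.erase ι, ‖σ (ζ ^ e - 1)‖
            ≤ ∏ _σ ∈ Finset.univ.erase ι, (2 : ℝ) :=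
              Finset.prod_le_prod (fun _ _ => norm_nonneg _) (fun σ _ => hfle σ)
          _ = 2 ^ (Nat.totient k - 1) := by
              rw [Finset.prod_const, Finset.card_erase_of_mem (Finset.mem_univ ι),
                Finset.card_univ, hcard]
      have hge : (2 : ℝ) ^ Nat.totient k ≤ ∏ σ : K →ₐ[ℚ] ℂ, ‖σ (ζ ^ e - 1)‖ := by
        rw [hAB]
        exact le_mul_of_one_le_right (by positivity) hBge
      rw [hsplit] at hge
      have h2n : (2 : ℝ) ^ Nat.totient k = 2 * 2 ^ (Nat.totient k - 1) := by
        rw [← pow_succ']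
        congr 1
        have := Nat.totient_pos.mpr hk
        omega
      have hrest0 : (0 : ℝ) ≤ ∏ σ ∈ Finset.univ.erase ι, ‖σ (ζ ^ e - 1)‖ :=
        Finset.prod_nonneg fun _ _ => norm_nonneg _
      nlinarith [norm_nonneg (ι (ζ ^ e - 1)),
        pow_pos (show (0 : ℝ) < 2 by norm_num) (Nat.totient k - 1)]
    set z : ℂ := ι (ζ ^ e) with hz
    have hz1 : ‖z‖ = 1 := hζσ ι e
    have hz2 : ‖z - 1‖ = 2 := by rw [map_sub, map_one] at hι2; exact hι2
    have hzm1 : z = -1 := complex_aux hz1 hz2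
    have hζe : ζ ^ e = -1 := by
      have h1 : ι (ζ ^ e) = ι (-1) := by rw [← hz, hzm1, map_neg, map_one]
      exact ι.injective h1
    have hej : e + j = i + k * j := by rw [he, add_assoc, hkj]
    have h1 : ζ ^ e * ζ ^ j = ζ ^ i := by rw [← pow_add, hej, pow_add, hone, mul_one]
    rw [← h1, hζe]
    ring


theorem unique_subgroup_of_order_k_is_two_maximal
    (k : ℕ) (hk : 0 < k) (hke : Even k)
    (p : ℕ) [Fact p.Prime] (hkp : k ∣ p - 1)
    (hp : p > 6 ^ Nat.totient k)
    (E : Subgroup (ZMod p)ˣ) (hE : Nat.card E = k) :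
    ∀ a b c d : (ZMod p)ˣ, a ∈ E → b ∈ E → c ∈ E → d ∈ E →
      (a : ZMod p) - (b : ZMod p) = 2 * ((c : ZMod p) - (d : ZMod p)) →
      a = b ∨ a = -b := by
  intro a b c d ha hb hc hd heq
  have hppos : 0 < p - 1 := Nat.sub_pos_of_lt (Fact.out (p := p.Prime)).one_lt
  have hkle : k ≤ p - 1 := Nat.le_of_dvd hppos hkp
  have hkltp : k < p := lt_of_le_of_lt hkle (Nat.sub_lt (Fact.out (p := p.Prime)).pos one_pos)
  have hpow : ∀ x : (ZMod p)ˣ, x ∈ E → (x : ZMod p) ^ k = 1 := by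
    intro x hx
    have h1 : (⟨x, hx⟩ : E) ^ k = 1 := by rw [← hE]; exact pow_card_eq_one'
    have h2 : x ^ k = 1 := by
      have := congrArg (Subgroup.subtype E) h1
      simpa using this
    simpa using congrArg (Units.val) h2
  haveI : IsCyclic E := Subgroup.isCyclic E
  obtain ⟨g0, hg0⟩ := IsCyclic.exists_generator (α := E)
  have hord0 : orderOf g0 = k := by
    rw [orderOf_eq_card_of_forall_mem_zpowers hg0]; exact hE
  have hordu : orderOf ((g0 : (ZMod p)ˣ)) = k := by
    rw [← hord0]; exact orderOf_injective E.subtype Subtype.coe_injective g0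
  have hordf : orderOf (((g0 : (ZMod p)ˣ) : ZMod p)) = k := by
    rw [← hordu]; exact orderOf_injective (Units.coeHom (ZMod p)) (fun _ _ h => Units.ext h) g0
  set g : ZMod p := ((g0 : (ZMod p)ˣ) : ZMod p) with hgdef
  have hg : IsPrimitiveRoot g k := by rw [← hordf]; exact IsPrimitiveRoot.orderOf g
  haveI : NeZero k := ⟨hk.ne'⟩
  haveI : IsCyclotomicExtension {k} ℚ (CyclotomicField k ℚ) :=
    CyclotomicField.isCyclotomicExtension k ℚ
  obtain ⟨i, hik, hgi⟩ := hg.eq_pow_of_pow_eq_one (hpow a ha)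
  obtain ⟨j, hjk, hgj⟩ := hg.eq_pow_of_pow_eq_one (hpow b hb)
  obtain ⟨l, hlk, hgl⟩ := hg.eq_pow_of_pow_eq_one (hpow c hc)
  obtain ⟨m, hmk, hgm⟩ := hg.eq_pow_of_pow_eq_one (hpow d hd)
  have heq0 : g ^ i - g ^ j - 2 * g ^ l + 2 * g ^ m = 0 := by
    rw [hgi, hgj, hgl, hgm]
    linear_combination heq
  have hstep := stepB k hk i j l m (stepA k hk p hkltp hp g hg i j l m heq0)
  have hζ' : IsPrimitiveRoot
      (IsCyclotomicExtension.zeta k ℚ (CyclotomicField k ℚ)) k :=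
    IsCyclotomicExtension.zeta_spec _ _ _
  have horder : orderOf (IsCyclotomicExtension.zeta k ℚ (CyclotomicField k ℚ)) = k :=
    hζ'.eq_orderOf.symm
  have hmod : (2 * i) % k = (2 * j) % k := by
    refine hζ'.pow_inj (Nat.mod_lt _ hk) (Nat.mod_lt _ hk) ?_
    calc (IsCyclotomicExtension.zeta k ℚ (CyclotomicField k ℚ)) ^ ((2 * i) % k)
        = (IsCyclotomicExtension.zeta k ℚ (CyclotomicField k ℚ)) ^ (2 * i) := by
          simpa only [horder] using pow_mod_orderOf (IsCyclotomicExtension.zeta k ℚ (CyclotomicField k ℚ)) (2 * i)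
      _ = (IsCyclotomicExtension.zeta k ℚ (CyclotomicField k ℚ)) ^ (2 * j) := hstep
      _ = (IsCyclotomicExtension.zeta k ℚ (CyclotomicField k ℚ)) ^ ((2 * j) % k) := by
          simpa only [horder] using (pow_mod_orderOf (IsCyclotomicExtension.zeta k ℚ (CyclotomicField k ℚ)) (2 * j)).symm
  have hgg : g ^ (2 * i) = g ^ (2 * j) := by
    have e1 : g ^ ((2 * i) % k) = g ^ (2 * i) := by
      simpa only [hordf] using pow_mod_orderOf g (2 * i)
    have e2 : g ^ ((2 * j) % k) = g ^ (2 * j) := by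
      simpa only [hordf] using pow_mod_orderOf g (2 * j)
    rw [← e1, ← e2, hmod]
  have hab : (↑a : ZMod p) ^ 2 = (↑b : ZMod p) ^ 2 := by
    rw [← hgi, ← hgj, ← pow_mul', ← pow_mul']
    exact hgg
  rcases (Commute.sq_eq_sq_iff_eq_or_eq_neg (Commute.all _ _)).mp hab with h | h
  · left; exact Units.ext h
  · right
    apply Units.ext
    rw [Units.val_neg]
    exact h
end

section
/- Let G ⊆ ℂ* be the group of k-th roots of unity with k even, and suppose a, b, c, d ∈ G satisfy a - b = 2(c - d) with a ≠ b and a ≠ -b. Then a contradiction follows; equivalently, any solution of a - b = 2(c - d) in G satisfies a = b (trivial) or a = -b with c - d = a (hexagonal). -/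
open Complex Polynomial

set_option maxHeartbeats 1600000

private lemma coprime_helper {t m : ℕ} (ht : t % 2 = 1) (h4 : Nat.gcd t m ∣ 4) :
    Nat.Coprime t m := by
  have hg : Nat.gcd t m ∣ t := Nat.gcd_dvd_left t m
  have hpos : 0 < Nat.gcd t m := Nat.gcd_pos_of_pos_left m (by omega)
  have hle : Nat.gcd t m ≤ 4 := Nat.le_of_dvd (by norm_num) h4
  have h14 : Nat.gcd t m = 1 ∨ Nat.gcd t m = 2 ∨ Nat.gcd t m = 3 ∨ Nat.gcd t m = 4 := by omega
  rcases h14 with h' | h' | h' | h'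
  · exact h'
  · rw [h'] at hg; omega
  · rw [h'] at h4; omega
  · rw [h'] at hg; omega

private lemma exists_good_t (m : ℕ) (h2 : 2 ≤ m) (h6 : m ≠ 6) :
    ∃ t : ℕ, Nat.Coprime t m ∧ m ≤ 4 * t ∧ 4 * t ≤ 3 * m := by
  rcases Nat.even_or_odd m with he | ho
  · obtain ⟨r, hr⟩ := he
    rcases Nat.even_or_odd r with hre | hro
    · obtain ⟨q, hq⟩ := hre
      have hq1 : 1 ≤ q := by omega
      refine ⟨2 * q - 1, coprime_helper (by omega) ?_, by omega, by omega⟩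
      have d1 : Nat.gcd (2 * q - 1) m ∣ 2 * (2 * q - 1) :=
        Dvd.dvd.mul_left (Nat.gcd_dvd_left _ _) 2
      have d2 : Nat.gcd (2 * q - 1) m ∣ m := Nat.gcd_dvd_right _ _
      have d3 : Nat.gcd (2 * q - 1) m ∣ m - 2 * (2 * q - 1) := Nat.dvd_sub d2 d1
      have hm2 : m - 2 * (2 * q - 1) = 2 := by omega
      rw [hm2] at d3
      exact d3.trans (by norm_num)
    · have hro' : r % 2 = 1 := Nat.odd_iff.mp hro
      by_cases hr1 : r = 1
      · exact ⟨1, Nat.coprime_one_left _, by omega, by omega⟩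
      · have hr5 : 5 ≤ r := by omega
        refine ⟨r - 2, coprime_helper (by omega) ?_, by omega, by omega⟩
        have d1 : Nat.gcd (r - 2) m ∣ 2 * (r - 2) :=
          Dvd.dvd.mul_left (Nat.gcd_dvd_left _ _) 2
        have d2 : Nat.gcd (r - 2) m ∣ m := Nat.gcd_dvd_right _ _
        have d3 : Nat.gcd (r - 2) m ∣ m - 2 * (r - 2) := Nat.dvd_sub d2 d1
        have hm2 : m - 2 * (r - 2) = 4 := by omega
        rwa [hm2] at d3
  · obtain ⟨q, hq⟩ := ho
    refine ⟨q, ?_, by omega, by omega⟩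
    have d1 : Nat.gcd q m ∣ 2 * q := Dvd.dvd.mul_left (Nat.gcd_dvd_left _ _) 2
    have d2 : Nat.gcd q m ∣ m := Nat.gcd_dvd_right _ _
    have d3 : Nat.gcd q m ∣ m - 2 * q := Nat.dvd_sub d2 d1
    have hm2 : m - 2 * q = 1 := by omega
    rw [hm2] at d3
    exact Nat.dvd_one.mp d3

private lemma lift_exponent {k m : ℕ} (hk : 0 < k) (hmk : m ∣ k) {t : ℕ}
    (ht : Nat.Coprime t m) : ∃ s : ℕ, Nat.Coprime s k ∧ s ≡ t [MOD m] := by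
  haveI : NeZero k := ⟨hk.ne'⟩
  have hm0 : m ≠ 0 := fun h => hk.ne' (Nat.eq_zero_of_zero_dvd (h ▸ hmk))
  haveI : NeZero m := ⟨hm0⟩
  obtain ⟨y, hy⟩ := ZMod.unitsMap_surjective hmk (ZMod.unitOfCoprime t ht)
  refine ⟨(y : ZMod k).val, ZMod.val_coe_unit_coprime y, ?_⟩
  have h2 := congrArg (fun u : (ZMod m)ˣ => (u : ZMod m)) hy
  simp only [ZMod.unitsMap_def, Units.coe_map, MonoidHom.coe_coe,
    ZMod.coe_unitOfCoprime, ZMod.castHom_apply] at h2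
  refine (ZMod.natCast_eq_natCast_iff _ _ _).mp ?_
  rw [ZMod.natCast_val]
  exact h2

theorem roots_of_unity_solutions_trivial_or_hexagonal
    (k : ℕ) (hk : 0 < k) (hke : Even k)
    (a b c d : ℂ) (ha : a ^ k = 1) (hb : b ^ k = 1) (hc : c ^ k = 1) (hd : d ^ k = 1)
    (h : a - b = 2 * (c - d)) : a = b ∨ (a = -b ∧ c - d = a) := by
  by_cases hab : a = b
  · exact Or.inl hab
  have hk0 : k ≠ 0 := hk.ne'
  haveI : NeZero k := ⟨hk0⟩
  have hnz : ∀ z : ℂ, z ^ k = 1 → z ≠ 0 := by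
    intro z hz h0
    rw [h0, zero_pow hk0] at hz
    exact zero_ne_one hz
  have ha0 := hnz a ha
  have hb0 := hnz b hb
  have hc0 := hnz c hc
  have hd0 := hnz d hd
  have hcdne : c ≠ d := by
    rintro rfl
    exact hab (sub_eq_zero.mp (h.trans (by ring)))
  have hnorm : ∀ z : ℂ, z ^ k = 1 → ‖z‖ = 1 := fun z hz =>
    Complex.norm_eq_one_of_pow_eq_one hz hk0
  have hconj : ∀ z : ℂ, z ^ k = 1 → (starRingEnd ℂ) z = z⁻¹ := by
    intro z hz
    have h1 : z * (starRingEnd ℂ) z = 1 := by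
      rw [Complex.mul_conj]
      norm_cast
      rw [Complex.normSq_eq_norm_sq, hnorm z hz]
      norm_num
    exact eq_inv_of_mul_eq_one_right h1
  -- conjugate the equation to get a*b = c*d
  have hc1 := congrArg (starRingEnd ℂ) h
  simp only [map_sub, map_mul, map_ofNat] at hc1
  rw [hconj a ha, hconj b hb, hconj c hc, hconj d hd] at hc1
  have hcd : a * b = c * d := by
    have h2 : (c - d) * (a * b - c * d) = 0 := by
      field_simp at hc1
      linear_combination ((1:ℂ)/2) * hc1 + (c * d / 2) * h
    rcases mul_eq_zero.mp h2 with h3 | h3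
    · exact absurd (sub_eq_zero.mp h3) hcdne
    · exact sub_eq_zero.mp h3
  set ζ : ℂ := Complex.exp (2 * Real.pi * Complex.I / k) with hζdef
  have hζ : IsPrimitiveRoot ζ k := Complex.isPrimitiveRoot_exp k hk0
  set u : ℂ := a / b with hudef
  set v : ℂ := c / d with hvdef
  have hu0 : u ≠ 0 := div_ne_zero ha0 hb0
  have hv0 : v ≠ 0 := div_ne_zero hc0 hd0
  have huk : u ^ k = 1 := by rw [hudef, div_pow, ha, hb]; norm_num
  have hvk : v ^ k = 1 := by rw [hvdef, div_pow, hc, hd]; norm_num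
  obtain ⟨i, hik, hui⟩ := hζ.eq_pow_of_pow_eq_one huk
  obtain ⟨j, hjk, hvj⟩ := hζ.eq_pow_of_pow_eq_one hvk
  have hEabcd : a ^ 2 * (c * d) + b ^ 2 * (c * d) + 6 * (a * b * (c * d))
      = 4 * (a * b * c ^ 2) + 4 * (a * b * d ^ 2) := by
    linear_combination (a * b * (a - b + 2 * c - 2 * d)) * h
      - (a ^ 2 + b ^ 2 - 2 * a * b) * hcd
  have hEuv : u ^ 2 * v + v + 6 * (u * v) = 4 * (u * v ^ 2) + 4 * u := by
    rw [hudef, hvdef]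
    field_simp
    linear_combination hEabcd
  set P : ℚ[X] := X ^ (2 * i + j) + X ^ j + 6 * X ^ (i + j) - 4 * X ^ (i + 2 * j) - 4 * X ^ i
    with hPdef
  have hPz : aeval ζ P = 0 := by
    simp only [hPdef, map_add, map_sub, map_mul, map_pow, aeval_X, map_ofNat]
    rw [← hui, ← hvj] at hEuv
    linear_combination hEuv
  have hdvd := minpoly.dvd ℚ ζ hPz
  have master : ∀ t : ℕ, Nat.Coprime t k → 2 * (u ^ t).re + 6 = 8 * (v ^ t).re := by
    intro t htk
    have hζt : IsPrimitiveRoot (ζ ^ t) k := hζ.pow_of_coprime t htk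
    have hroot : aeval (ζ ^ t) (minpoly ℚ ζ) = 0 := by
      rw [← Polynomial.cyclotomic_eq_minpoly_rat hζ hk, aeval_def, eval₂_eq_eval_map,
        map_cyclotomic]
      exact hζt.isRoot_cyclotomic hk
    have hPt : aeval (ζ ^ t) P = 0 := by
      obtain ⟨Q, hQ⟩ := hdvd
      rw [hQ, map_mul, hroot, zero_mul]
    have hEt : (u ^ t) ^ 2 * v ^ t + v ^ t + 6 * (u ^ t * v ^ t)
        = 4 * (u ^ t * (v ^ t) ^ 2) + 4 * u ^ t := by
      rw [← hui, ← hvj]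
      simp only [hPdef, map_add, map_sub, map_mul, map_pow, aeval_X, map_ofNat] at hPt
      linear_combination hPt
    have hUk : (u ^ t) ^ k = 1 := by rw [← pow_mul, mul_comm, pow_mul, huk, one_pow]
    have hVk : (v ^ t) ^ k = 1 := by rw [← pow_mul, mul_comm, pow_mul, hvk, one_pow]
    have hU0 : u ^ t ≠ 0 := pow_ne_zero t hu0
    have hV0 : v ^ t ≠ 0 := pow_ne_zero t hv0
    have hinvrel : (u ^ t) + (u ^ t)⁻¹ + 6 = 4 * (v ^ t) + 4 * (v ^ t)⁻¹ := by
      field_simp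
      linear_combination hEt
    rw [← hconj _ hUk, ← hconj _ hVk] at hinvrel
    have h5 := congrArg Complex.re hinvrel
    simp only [Complex.add_re, Complex.sub_re, Complex.mul_re, Complex.conj_re,
      Complex.conj_im, Complex.zero_re, Complex.re_ofNat, Complex.im_ofNat] at h5
    linarith
  have hreUbound : ∀ t : ℕ, -1 ≤ (u ^ t).re := by
    intro t
    have hUk : (u ^ t) ^ k = 1 := by rw [← pow_mul, mul_comm, pow_mul, huk, one_pow]
    have h6 := (abs_le.mp (Complex.abs_re_le_norm (u ^ t))).1
    rw [hnorm _ hUk] at h6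
    linarith
  set m := orderOf v with hmdef
  have hmdvd : m ∣ k := orderOf_dvd_of_pow_eq_one hvk
  have hmpos : 0 < m := by
    rw [hmdef, orderOf_pos_iff]
    exact isOfFinOrder_iff_pow_eq_one.mpr ⟨k, hk, hvk⟩
  haveI : NeZero m := ⟨hmpos.ne'⟩
  have hvm : IsPrimitiveRoot v m := IsPrimitiveRoot.orderOf v
  clear_value m
  by_cases hm1 : m = 1
  · exfalso
    have hv1 : v = 1 := orderOf_eq_one_iff.mp (hmdef ▸ hm1)
    rw [hvdef] at hv1
    exact hcdne (by field_simp at hv1; exact hv1)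
  by_cases hm6 : m = 6
  · -- hexagonal case
    have hv6 : v ^ 6 = 1 := by rw [← hm6, hmdef]; exact pow_orderOf_eq_one v
    have hv3 : v ^ 3 = -1 := by
      have h9 : (v ^ 3 - 1) * (v ^ 3 + 1) = 0 := by linear_combination hv6
      rcases mul_eq_zero.mp h9 with h9 | h9
      · exfalso
        have h10 : v ^ 3 = 1 := by linear_combination h9
        have h11 := orderOf_dvd_of_pow_eq_one h10
        rw [← hmdef, hm6] at h11
        exact absurd h11 (by norm_num)
      · linear_combination h9
    have hvne : v ≠ -1 := by
      intro hv
      have h10 : v ^ 2 = 1 := by rw [hv]; ring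
      have h11 := orderOf_dvd_of_pow_eq_one h10
      rw [← hmdef, hm6] at h11
      exact absurd h11 (by norm_num)
    have hquad : v ^ 2 - v + 1 = 0 := by
      have hf : (v + 1) * (v ^ 2 - v + 1) = 0 := by linear_combination hv3
      rcases mul_eq_zero.mp hf with h9 | h9
      · exact absurd (eq_neg_of_add_eq_zero_left h9) hvne
      · exact h9
    have hvre : v.re = 1 / 2 := by
      have hmul : v * (1 - v) = 1 := by linear_combination -hquad
      have hcv : (starRingEnd ℂ) v = 1 - v := by
        rw [hconj v hvk]
        exact (eq_inv_of_mul_eq_one_right hmul).symm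
      have hsum : v + (starRingEnd ℂ) v = 1 := by rw [hcv]; ring
      have h11 := congrArg Complex.re hsum
      simp only [Complex.add_re, Complex.conj_re, Complex.one_re] at h11
      linarith
    have hrel := master 1 (Nat.coprime_one_left k)
    simp only [pow_one] at hrel
    rw [hvre] at hrel
    have hure : u.re = -1 := by linarith
    have huim : u.im = 0 := by
      have hn : Complex.normSq u = 1 := by
        rw [← Complex.sq_norm, hnorm u huk]
        norm_num
      rw [Complex.normSq_apply] at hn
      nlinarith
    have hu_eq : u = -1 := by
      apply Complex.ext
      · simp [hure]
      · simp [huim]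
    have habneg : a = -b := by
      rw [hudef] at hu_eq
      field_simp at hu_eq
      exact hu_eq
    refine Or.inr ⟨habneg, ?_⟩
    have h2 : (2 : ℂ) * (c - d) = 2 * a := by rw [← h, habneg]; ring
    exact mul_left_cancel₀ two_ne_zero h2
  · -- contradiction case
    exfalso
    have hm2 : 2 ≤ m := by omega
    obtain ⟨t₀, ht₀m, hlb, hub⟩ := exists_good_t m hm2 hm6
    set w : ℂ := Complex.exp (2 * Real.pi * Complex.I / m) ^ t₀ with hwdef
    have hwprim : IsPrimitiveRoot w m :=
      (Complex.isPrimitiveRoot_exp m hmpos.ne').pow_of_coprime t₀ ht₀m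
    have hwre : w.re ≤ 0 := by
      rw [hwdef, ← Complex.exp_nat_mul]
      have hmR : (0 : ℝ) < m := by exact_mod_cast hmpos
      have hlbR : (m : ℝ) ≤ 4 * t₀ := by exact_mod_cast hlb
      have hubR : (4 : ℝ) * t₀ ≤ 3 * m := by exact_mod_cast hub
      have harg : (t₀ : ℂ) * (2 * Real.pi * Complex.I / m)
          = ((2 * Real.pi * t₀ / m : ℝ) : ℂ) * Complex.I := by
        push_cast
        ring
      rw [harg, Complex.exp_ofReal_mul_I_re]
      apply Real.cos_nonpos_of_pi_div_two_le_of_le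
      · rw [le_div_iff₀ hmR]
        nlinarith [Real.pi_pos]
      · rw [div_le_iff₀ hmR]
        nlinarith [Real.pi_pos]
    obtain ⟨s, hsm, hvs⟩ := hvm.eq_pow_of_pow_eq_one hwprim.pow_eq_one
    have hscop : Nat.Coprime s m := (hvm.pow_iff_coprime hmpos s).mp (hvs ▸ hwprim)
    obtain ⟨s', hs'k, hs'mod⟩ := lift_exponent hk hmdvd hscop
    have hvs' : v ^ s' = w := by
      rw [← hvs]
      have h1 : s' % orderOf v = s % orderOf v := by rw [← hmdef]; exact hs'mod
      rw [← pow_mod_orderOf, h1, pow_mod_orderOf]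
    have hrel := master s' hs'k
    rw [hvs'] at hrel
    have hub2 := hreUbound s'
    linarith
end

section
/- Let E ⊆ (ℤ/pℤ)* be a 2-maximal even subgroup (p ≥ 5 prime), and fix a, b ∈ E with a ≠ b. Then the equation a' + 2b' = a + 2b with a', b' ∈ E has at most one solution other than (a', b') = (a, b), namely the hexagonal one a' = -a, b' = a + b (which requires a + b ∈ E). -/
theorem hexagonal_solution_unique
    (p : ℕ) [Fact p.Prime] (hp : 5 ≤ p)
    (E : Subgroup (ZMod p)ˣ) (heven : (-1 : (ZMod p)ˣ) ∈ E)
    (hmax : ∀ x y z w : (ZMod p)ˣ, x ∈ E → y ∈ E → z ∈ E → w ∈ E →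
      (x : ZMod p) - (y : ZMod p) = 2 * ((z : ZMod p) - (w : ZMod p)) → x = y ∨ x = -y)
    (a b : (ZMod p)ˣ) (ha : a ∈ E) (hb : b ∈ E) (hab : a ≠ b) :
    ∀ a' b' : (ZMod p)ˣ, a' ∈ E → b' ∈ E →
      (a' : ZMod p) + 2 * (b' : ZMod p) = (a : ZMod p) + 2 * (b : ZMod p) →
      (a' = a ∧ b' = b) ∨
      ((a' : ZMod p) = -(a : ZMod p) ∧ (b' : ZMod p) = (a : ZMod p) + (b : ZMod p)) := by
  intro a' b' ha' hb' heq
  have h2 : (2 : ZMod p) ≠ 0 := by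
    intro h
    have : ((2 : ℕ) : ZMod p) = 0 := by exact_mod_cast h
    have hdvd := (ZMod.natCast_eq_zero_iff 2 p).mp this
    have := Nat.le_of_dvd (by norm_num) hdvd
    omega
  have hkey : (a' : ZMod p) - (a : ZMod p) = 2 * ((b : ZMod p) - (b' : ZMod p)) := by
    linear_combination heq
  rcases hmax a' a b b' ha' ha hb hb' hkey with h | h
  · left
    refine ⟨h, ?_⟩
    have h1 : (2 : ZMod p) * b' = 2 * b := by
      rw [h] at heq
      linear_combination heq
    exact Units.ext (mul_left_cancel₀ h2 h1)
  · right
    have hcoe : (a' : ZMod p) = -(a : ZMod p) := by rw [h]; simp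
    refine ⟨hcoe, ?_⟩
    have h1 : (2 : ZMod p) * b' = 2 * ((a : ZMod p) + b) := by
      linear_combination heq - hcoe
    exact mul_left_cancel₀ h2 h1
end
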